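/- Let f : [0,∞) → ℝ be non-zero, continuous, and g : [0,∞) → [0,∞) satisfy f(s + g(s)·t) = f(s) + f(t) for all s,t ≥ 0. Then f is monotone (either non-decreasing on [0,∞) or non-increasing on [0,∞)). -/

import Mathlib

/-- a non-zero continuous solution f is monotone on [0,∞). -/
theorem stmt12 (f : ℝ → ℝ) (g : ℝ → ℝ)
    (hgnn : ∀ s : ℝ, 0 ≤ s → 0 ≤ g s)
    (heq : ∀ s t : ℝ, 0 ≤ s → 0 ≤ t → f (s + g s * t) = f s + f t)
    (hfnz : ∃ s : ℝ, 0 ≤ s ∧ f s ≠ 0)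
    (hcont : ContinuousOn f (Set.Ici 0)) :
    MonotoneOn f (Set.Ici 0) ∨ AntitoneOn f (Set.Ici 0) := by
  -- g is strictly positive on [0,∞)
  have hg : ∀ s : ℝ, 0 ≤ s → 0 < g s := by
    intro s hs
    rcases (hgnn s hs).lt_or_eq with h | h
    · exact h
    · exfalso
      obtain ⟨a, ha0, hfa⟩ := hfnz
      have h2 := heq s a hs ha0
      rw [← h] at h2
      simp at h2
      exact hfa (by linarith)
  have hf0 : f 0 = 0 := by
    have h := heq 0 0 le_rfl le_rfl
    simp at h
    linarith
  -- decompose : if x = b with a ≤ b then f b = f a + f ((b-a)/g a)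
  have hdec : ∀ a b : ℝ, 0 ≤ a → a ≤ b → f b = f a + f ((b - a) / g a) := by
    intro a b ha hab
    have hga := hg a ha
    have ht0 : 0 ≤ (b - a) / g a := div_nonneg (by linarith) hga.le
    have hb' : a + g a * ((b - a) / g a) = b := by
      field_simp
      ring
    rw [show b = a + g a * ((b - a) / g a) from hb'.symm, heq a _ ha ht0]
    rw [hb']
  by_cases hPos : ∀ x : ℝ, 0 ≤ x → 0 ≤ f x
  · left
    intro a ha b hb hab
    simp only [Set.mem_Ici] at ha hb
    have := hdec a b ha hab
    have h2 := hPos ((b - a) / g a) (div_nonneg (by linarith) (hg a ha).le)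
    linarith
  by_cases hNeg : ∀ x : ℝ, 0 ≤ x → f x ≤ 0
  · right
    intro a ha b hb hab
    simp only [Set.mem_Ici] at ha hb
    have := hdec a b ha hab
    have h2 := hNeg ((b - a) / g a) (div_nonneg (by linarith) (hg a ha).le)
    linarith
  exfalso
  push_neg at hPos hNeg
  obtain ⟨q, hq0, hfq⟩ := hPos  -- f q < 0
  obtain ⟨p, hp0, hfp⟩ := hNeg  -- 0 < f p
  have hp0' : 0 < p := by
    rcases hp0.lt_or_eq with h | h
    · exact h
    · exfalso; rw [← h, hf0] at hfp; exact lt_irrefl 0 hfp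
  have hq0' : 0 < q := by
    rcases hq0.lt_or_eq with h | h
    · exact h
    · exfalso; rw [← h, hf0] at hfq; exact lt_irrefl 0 hfq
  -- there is a zero r > 0 of f
  obtain ⟨r, hrpos, hfr⟩ : ∃ r : ℝ, 0 < r ∧ f r = 0 := by
    rcases le_total p q with h | h
    · have sub : Set.Icc p q ⊆ Set.Ici 0 := fun x hx => le_trans hp0 hx.1
      have ivt := intermediate_value_Icc' h (hcont.mono sub)
      have h0 : (0:ℝ) ∈ Set.Icc (f q) (f p) := ⟨hfq.le, hfp.le⟩
      obtain ⟨r, hr, hfr⟩ := ivt h0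
      exact ⟨r, lt_of_lt_of_le hp0' hr.1, hfr⟩
    · have sub : Set.Icc q p ⊆ Set.Ici 0 := fun x hx => le_trans hq0 hx.1
      have ivt := intermediate_value_Icc h (hcont.mono sub)
      have h0 : (0:ℝ) ∈ Set.Icc (f q) (f p) := ⟨hfq.le, hfp.le⟩
      obtain ⟨r, hr, hfr⟩ := ivt h0
      exact ⟨r, lt_of_lt_of_le hq0' hr.1, hfr⟩
  have hr0 : (0:ℝ) ≤ r := hrpos.le
  have hgr : 0 < g r := hg r hr0
  have key : ∀ t : ℝ, 0 ≤ t → f (r + g r * t) = f t := by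
    intro t ht
    rw [heq r t hr0 ht, hfr, zero_add]
  rcases lt_or_ge (g r) 1 with hlt | hge
  · -- contraction case : f is constant, contradiction
    set P : ℝ := r / (1 - g r) with hPdef
    have h1gr : 0 < 1 - g r := by linarith
    have hP0 : 0 ≤ P := div_nonneg hr0 h1gr.le
    have hPfix : r + g r * P = P := by
      rw [hPdef]
      field_simp
      ring
    have hconst : ∀ x : ℝ, 0 ≤ x → f x = f P := by
      intro x hx
      set a : ℕ → ℝ := fun n => P + (g r) ^ n * (x - P) with ha
      have hmem : ∀ n, 0 ≤ a n := by
        intro n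
        have h1 : 0 ≤ (g r) ^ n := pow_nonneg hgr.le n
        have h2 : (g r) ^ n ≤ 1 := pow_le_one₀ hgr.le hlt.le
        simp only [ha]
        rcases le_total P x with h | h
        · nlinarith
        · nlinarith
      have hfa : ∀ n, f (a n) = f x := by
        intro n
        induction n with
        | zero => simp [ha]
        | succ n ih =>
          have step : a (n + 1) = r + g r * a n := by
            simp only [ha]
            linear_combination -hPfix
          rw [step, key (a n) (hmem n), ih]
      have T : Filter.Tendsto a Filter.atTop (nhds P) := by
        have h1 : Filter.Tendsto (fun n : ℕ => (g r) ^ n) Filter.atTop (nhds 0) :=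
          tendsto_pow_atTop_nhds_zero_of_lt_one hgr.le hlt
        have h2 := (h1.mul_const (x - P)).const_add P
        simpa using h2
      have cw : ContinuousWithinAt f (Set.Ici 0) P := hcont P (Set.mem_Ici.mpr hP0)
      have T2 : Filter.Tendsto (fun n => f (a n)) Filter.atTop (nhds (f P)) :=
        cw.tendsto.comp (tendsto_nhdsWithin_iff.mpr ⟨T, Filter.Eventually.of_forall hmem⟩)
      have heqfun : (fun n => f (a n)) = fun _ => f x := funext hfa
      rw [heqfun] at T2
      exact tendsto_nhds_unique tendsto_const_nhds T2
    have h1 := hconst p hp0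
    have h2 := hconst 0 le_rfl
    rw [hf0] at h2
    rw [h1, ← h2] at hfp
    exact lt_irrefl 0 hfp
  · -- expanding case : f bounded above on [0,∞), contradicting unboundedness
    have hsub : Set.Icc (0:ℝ) r ⊆ Set.Ici 0 := fun x hx => hx.1
    obtain ⟨z, hz, hmax'⟩ := (isCompact_Icc : IsCompact (Set.Icc (0:ℝ) r)).exists_isMaxOn
      ⟨0, le_rfl, hr0⟩ (hcont.mono hsub)
    have hmax : ∀ y ∈ Set.Icc (0:ℝ) r, f y ≤ f z := hmax'
    have bound : ∀ n : ℕ, ∀ x : ℝ, 0 ≤ x → x ≤ n * r → f x ≤ f z := by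
      intro n
      induction n with
      | zero =>
        intro x hx hxn
        have hx0 : x = 0 := le_antisymm (by simpa using hxn) hx
        subst hx0
        exact hmax 0 ⟨le_rfl, hr0⟩
      | succ n ih =>
        intro x hx hxn
        by_cases hxr : x ≤ r
        · exact hmax x ⟨hx, hxr⟩
        · push_neg at hxr
          set y : ℝ := (x - r) / g r with hy
          have hy0 : 0 ≤ y := div_nonneg (by linarith) hgr.le
          have hyx : f x = f y := by
            have hxy : r + g r * y = x := by
              rw [hy]; field_simp; ring
            rw [← hxy, key y hy0]
          have h1 : y ≤ x - r := by
            rw [hy, div_le_iff₀ hgr]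
            nlinarith
          have h2 : x - r ≤ n * r := by
            push_cast at hxn
            linarith
          rw [hyx]
          exact ih y hy0 (by linarith)
    have btotal : ∀ x : ℝ, 0 ≤ x → f x ≤ f z := by
      intro x hx
      obtain ⟨n, hn⟩ := exists_nat_gt (x / r)
      have : x ≤ n * r := ((div_lt_iff₀ hrpos).mp hn).le
      exact bound n x hx this
    have grow : ∀ n : ℕ, ∃ x : ℝ, 0 ≤ x ∧ f x = (n + 1) * f p := by
      intro n
      induction n with
      | zero => exact ⟨p, hp0, by push_cast; ring⟩
      | succ n ih =>
        obtain ⟨x, hx0, hfx⟩ := ih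
        refine ⟨x + g x * p, add_nonneg hx0 (mul_nonneg (hg x hx0).le hp0), ?_⟩
        rw [heq x p hx0 hp0, hfx]
        push_cast
        ring
    obtain ⟨n, hn⟩ := exists_nat_gt (f z / f p)
    obtain ⟨x, hx0, hfx⟩ := grow n
    have h1 : f z < n * f p := (div_lt_iff₀ hfp).mp hn
    have h2 : (n : ℝ) * f p ≤ (n + 1) * f p := by nlinarith
    have h3 := btotal x hx0
    rw [hfx] at h3
    linarith
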